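/- For every integer n ≥ 1, Σ_{r=0}^{n} (−1)^{n−r} 2^{2r−1} C(n+r+λ−1, r) C(n+r, 2r) / C(n+r, r) = (1/2) · C(2n+2λ−1, 2n−1) / C(n+λ−1, n−1), as an identity of polynomials (or rational functions) in λ. -/

import Mathlib

open Finset

/-- The generalized binomial coefficient `C(a, b) = a(a-1)⋯(a-b+1)/b!` for real `a`. -/
noncomputable def gbinom (a : ℝ) (b : ℕ) : ℝ :=
  (∏ i ∈ Finset.range b, (a - i)) / (b.factorial : ℝ)

/-- Rising-factorial-like product `(x)(x+1)⋯(x+m-1)`. -/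
noncomputable def rpr (x : ℝ) (m : ℕ) : ℝ := ∏ i ∈ Finset.range m, (x + i)

lemma rpr_succ (x : ℝ) (m : ℕ) : rpr x (m + 1) = rpr x m * (x + m) :=
  Finset.prod_range_succ _ _

lemma rpr_add (x : ℝ) (a b : ℕ) : rpr x (a + b) = rpr x a * rpr (x + a) b := by
  unfold rpr
  rw [Finset.prod_range_add]
  congr 1
  refine Finset.prod_congr rfl fun i _ => ?_
  push_cast; ring

lemma rpr_pos {x : ℝ} (hx : 0 < x) (m : ℕ) : 0 < rpr x m := by
  unfold rpr
  exact Finset.prod_pos fun i _ => by positivity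

/-- Polynomial Chu–Vandermonde identity. -/
lemma chu (n : ℕ) : ∀ t c : ℝ,
    ∑ r ∈ Finset.range (n + 1),
      (-1 : ℝ) ^ r * (n.choose r : ℝ) * rpr t r * rpr (c + r) (n - r) = rpr (c - t) n := by
  induction n with
  | zero => intro t c; simp [rpr]
  | succ n ih =>
    intro t c
    have hg : ∀ r ∈ Finset.range (n + 1),
        (-1 : ℝ) ^ (r+1) * (n.choose (r+1) : ℝ) * rpr t (r+1) * rpr (c + ((r+1 : ℕ) : ℝ)) (n + 1 - (r+1))
          = (-1 : ℝ) ^ (r+1) * (n.choose (r+1) : ℝ) * rpr t (r+1) * rpr (c + ((r+1 : ℕ) : ℝ)) (n - (r+1)) * (c + n) := by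
      intro r hr
      rcases Nat.lt_or_ge r n with h | h
      · have h1 : n + 1 - (r+1) = (n - (r+1)) + 1 := by omega
        rw [h1, rpr_succ (c + ((r+1 : ℕ) : ℝ)) (n - (r+1))]
        have h5 : (c + ((r+1 : ℕ) : ℝ) + ((n - (r+1) : ℕ) : ℝ)) = c + n := by
          have : ((n - (r+1) : ℕ) : ℝ) = (n : ℝ) - ((r+1 : ℕ) : ℝ) := by
            rw [Nat.cast_sub (by omega : r + 1 ≤ n)]
          rw [this]; ring
        rw [h5]; ring
      · have hrn : r = n := by simp at hr; omega
        subst hrn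
        simp [Nat.choose_succ_self]
    rw [Finset.sum_range_succ']
    have pascal : ∀ r : ℕ, ((n+1).choose (r+1) : ℝ) = (n.choose r : ℝ) + (n.choose (r+1) : ℝ) := by
      intro r; rw [Nat.choose_succ_succ]; push_cast; ring
    have split : ∑ r ∈ Finset.range (n + 1),
        (-1 : ℝ) ^ (r+1) * ((n+1).choose (r+1) : ℝ) * rpr t (r+1) * rpr (c + ((r+1 : ℕ) : ℝ)) (n + 1 - (r+1))
        = (∑ r ∈ Finset.range (n + 1),
            (-1 : ℝ) ^ (r+1) * (n.choose (r+1) : ℝ) * rpr t (r+1) * rpr (c + ((r+1 : ℕ) : ℝ)) (n - (r+1)) * (c + n))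
          + (∑ r ∈ Finset.range (n + 1),
            (-1 : ℝ) ^ (r+1) * (n.choose r : ℝ) * rpr t (r+1) * rpr (c + ((r+1 : ℕ) : ℝ)) (n - r)) := by
      rw [← Finset.sum_add_distrib]
      refine Finset.sum_congr rfl fun r hr => ?_
      rw [pascal, ← hg r hr]
      have h2 : n + 1 - (r + 1) = n - r := by omega
      rw [h2]; ring
    rw [split]
    have hT2 : ∑ r ∈ Finset.range (n + 1),
        (-1 : ℝ) ^ (r+1) * (n.choose r : ℝ) * rpr t (r+1) * rpr (c + ((r+1 : ℕ) : ℝ)) (n - r)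
        = -t * rpr (c - t) n := by
      have hih := ih (t+1) (c+1)
      rw [show c + 1 - (t + 1) = c - t by ring] at hih
      rw [← hih, Finset.mul_sum]
      refine Finset.sum_congr rfl fun r hr => ?_
      have h3 : rpr t (r+1) = t * rpr (t+1) r := by
        rw [show r + 1 = 1 + r by omega, rpr_add]
        simp [rpr]
      have h4 : rpr (c + ((r+1 : ℕ) : ℝ)) (n - r) = rpr (c + 1 + r) (n - r) := by
        congr 1; push_cast; ring
      rw [h3, h4]; ring
    have hT1 : (∑ r ∈ Finset.range (n + 1),
        (-1 : ℝ) ^ (r+1) * (n.choose (r+1) : ℝ) * rpr t (r+1) * rpr (c + ((r+1 : ℕ) : ℝ)) (n - (r+1)) * (c + n))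
        + rpr c (n + 1) = rpr (c - t) n * (c + n) := by
      have e0 : rpr c (n+1)
          = (fun r : ℕ => (-1:ℝ)^r * (n.choose r : ℝ) * rpr t r * rpr (c + r) (n - r) * (c + n)) 0 := by
        simp [rpr, Finset.prod_range_succ]
      rw [e0, ← Finset.sum_range_succ'
        (fun r : ℕ => (-1:ℝ)^r * (n.choose r : ℝ) * rpr t r * rpr (c + r) (n - r) * (c + n)) (n+1),
        Finset.sum_range_succ]
      simp only [Nat.choose_succ_self, Nat.cast_zero, zero_mul, mul_zero, add_zero]
      rw [← Finset.sum_mul, ih t c]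
    calc (∑ r ∈ Finset.range (n + 1),
        (-1 : ℝ) ^ (r+1) * (n.choose (r+1) : ℝ) * rpr t (r+1) * rpr (c + ((r+1 : ℕ) : ℝ)) (n - (r+1)) * (c + n))
          + (∑ r ∈ Finset.range (n + 1),
        (-1 : ℝ) ^ (r+1) * (n.choose r : ℝ) * rpr t (r+1) * rpr (c + ((r+1 : ℕ) : ℝ)) (n - r))
          + (-1:ℝ)^0 * ((n+1).choose 0 : ℝ) * rpr t 0 * rpr (c + ((0:ℕ) : ℝ)) (n + 1 - 0)
        = (rpr (c - t) n * (c + n)) + (-t * rpr (c - t) n) := by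
          rw [hT2]
          have h6 : (-1:ℝ)^0 * ((n+1).choose 0 : ℝ) * rpr t 0 * rpr (c + ((0:ℕ) : ℝ)) (n + 1 - 0) = rpr c (n+1) := by
            simp [rpr]
          rw [h6, ← hT1]; ring
      _ = rpr (c - t) (n + 1) := by rw [rpr_succ]; ring

lemma half_fact : ∀ r : ℕ, (4:ℝ)^r * r.factorial * rpr (1/2) r = ((2*r).factorial : ℝ) := by
  intro r
  induction r with
  | zero => simp [rpr]
  | succ r ih =>
    rw [rpr_succ]
    have h1 : 2 * (r + 1) = (2*r) + 1 + 1 := by ring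
    rw [h1, Nat.factorial_succ, Nat.factorial_succ, Nat.factorial_succ]
    push_cast
    linear_combination (4*((r:ℝ)+1)*(1/2+(r:ℝ))) * ih

lemma rpr_reflect (x : ℝ) (m : ℕ) : ∏ i ∈ Finset.range m, (x + m - 1 - i) = rpr x m := by
  unfold rpr
  rw [← Finset.prod_range_reflect (fun j => x + j) m]
  refine Finset.prod_congr rfl fun i hi => ?_
  simp only [Finset.mem_range] at hi
  rw [Nat.cast_sub (by omega : i ≤ m - 1), Nat.cast_sub (by omega : 1 ≤ m)]
  push_cast; ring

lemma rpr_split : ∀ (m : ℕ) (l : ℝ),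
    rpr (2*l+1) (2*m+1) = 2^(2*m+1) * rpr (l+1/2) (m+1) * rpr (l+1) m := by
  intro m
  induction m with
  | zero => intro l; simp [rpr]; ring
  | succ m ih =>
    intro l
    have h1 : 2 * (m+1) + 1 = (2*m+1) + 1 + 1 := by ring
    rw [h1, rpr_succ, rpr_succ, ih l, rpr_succ (l+1/2) (m+1), rpr_succ (l+1) m]
    push_cast
    ring

lemma rpr_half_pos (m : ℕ) (r : ℕ) : (0:ℝ) < rpr (1/2 + r) m := by
  apply rpr_pos; positivity

lemma sum_eq (n : ℕ) (l : ℝ) :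
    (∑ r ∈ Finset.range (n + 1),
        (-1 : ℝ) ^ (n - r) * 2 ^ (2 * r - 1 : ℤ) * gbinom ((n : ℝ) + r + l - 1) r *
          ((n + r).choose (2 * r) : ℝ) / ((n + r).choose r : ℝ))
      = 1/2 * rpr (l + 1/2) n / rpr (1/2) n := by
  have step : ∀ r ∈ Finset.range (n+1),
      (-1 : ℝ) ^ (n - r) * 2 ^ (2 * r - 1 : ℤ) * gbinom ((n : ℝ) + r + l - 1) r *
          ((n + r).choose (2 * r) : ℝ) / ((n + r).choose r : ℝ)
      = (1/2 / rpr (1/2) n * (-1)^n) *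
          ((-1:ℝ)^r * (n.choose r : ℝ) * rpr ((n:ℝ) + l) r * rpr (1/2 + r) (n - r)) := by
    intro r hr
    have hrn : r ≤ n := by
      simp only [Finset.mem_range] at hr; omega
    -- zpow
    have hzpow : (2:ℝ) ^ (2 * (r:ℤ) - 1) = 4 ^ r / 2 := by
      rw [zpow_sub₀ (by norm_num : (2:ℝ) ≠ 0), zpow_one]
      congr 1
      rw [show (2 * (r:ℤ)) = ((2*r : ℕ) : ℤ) by push_cast; ring, zpow_natCast, pow_mul]
      norm_num
    -- gbinom as rising product
    have hgb : gbinom ((n:ℝ) + r + l - 1) r = rpr ((n:ℝ) + l) r / r.factorial := by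
      unfold gbinom
      congr 1
      rw [← rpr_reflect ((n:ℝ) + l) r]
      exact Finset.prod_congr rfl fun i _ => by ring
    -- factorial identities
    have e1 := Nat.choose_mul_factorial_mul_factorial (show 2*r ≤ n+r by omega)
    rw [show n+r-2*r = n-r by omega] at e1
    have e1' : (((n+r).choose (2*r)) : ℝ) * ((2*r).factorial : ℝ) * ((n-r).factorial : ℝ)
        = ((n+r).factorial : ℝ) := by exact_mod_cast e1
    have e2 := Nat.choose_mul_factorial_mul_factorial (show r ≤ n+r by omega)
    rw [show n+r-r = n by omega] at e2
    have e2' : (((n+r).choose r) : ℝ) * (r.factorial : ℝ) * (n.factorial : ℝ)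
        = ((n+r).factorial : ℝ) := by exact_mod_cast e2
    have e3 := Nat.choose_mul_factorial_mul_factorial hrn
    have e3' : ((n.choose r) : ℝ) * (r.factorial : ℝ) * ((n-r).factorial : ℝ)
        = (n.factorial : ℝ) := by exact_mod_cast e3
    have e6 := half_fact r
    have e5 : rpr (1/2) n = rpr (1/2) r * rpr (1/2 + (r:ℝ)) (n - r) := by
      have := rpr_add (1/2) r (n-r)
      rw [show r + (n-r) = n by omega] at this
      exact this
    -- sign
    have h8 : (-1:ℝ)^(n-r) * (-1:ℝ)^r = (-1:ℝ)^n := by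
      rw [← pow_add, Nat.sub_add_cancel hrn]
    have h9 : (-1:ℝ)^r * (-1:ℝ)^r = 1 := by
      rw [← pow_add, ← two_mul, pow_mul]; norm_num
    -- nonzero facts
    have f1 : ((r.factorial : ℝ)) ≠ 0 := by positivity
    have f2 : (((n+r).choose r : ℕ) : ℝ) ≠ 0 := by
      have := Nat.choose_pos (show r ≤ n+r by omega); positivity
    have f3 : (((2*r).factorial : ℝ)) ≠ 0 := by positivity
    have f4 : (((n-r).factorial : ℝ)) ≠ 0 := by positivity
    have f5 : ((n.factorial : ℝ)) ≠ 0 := by positivity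
    have f6 : (((n+r).factorial : ℝ)) ≠ 0 := by positivity
    have f7 : rpr (1/2) n ≠ 0 := ne_of_gt (rpr_pos (by norm_num) n)
    have f8 : rpr (1/2) r ≠ 0 := ne_of_gt (rpr_pos (by norm_num) r)
    have f9 : (4:ℝ)^r ≠ 0 := by positivity
    have hC1v : (((n+r).choose (2*r)) : ℝ)
        = ((n+r).factorial : ℝ) / (((2*r).factorial : ℝ) * ((n-r).factorial : ℝ)) := by
      field_simp; linear_combination e1'
    have hC2v : (((n+r).choose r) : ℝ) = ((n+r).factorial : ℝ) / ((r.factorial : ℝ) * (n.factorial : ℝ)) := by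
      field_simp; linear_combination e2'
    have hC3v : ((n.choose r) : ℝ) = (n.factorial : ℝ) / ((r.factorial : ℝ) * ((n-r).factorial : ℝ)) := by
      field_simp; linear_combination e3'
    have hBr : rpr (1/2) r = ((2*r).factorial : ℝ) / ((4:ℝ)^r * (r.factorial : ℝ)) := by
      field_simp; linear_combination e6
    have hBnr : rpr (1/2 + (r:ℝ)) (n - r)
        = rpr (1/2) n * ((4:ℝ)^r * (r.factorial : ℝ)) / ((2*r).factorial : ℝ) := by
      have hx : rpr (1/2) r * rpr (1/2 + (r:ℝ)) (n-r) = rpr (1/2) n := e5.symm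
      rw [hBr] at hx
      field_simp at hx
      field_simp
      linear_combination hx
    have h8' : (-1:ℝ)^(n-r) = (-1:ℝ)^n * (-1:ℝ)^r := by
      rw [← h8, mul_assoc, h9, mul_one]
    rw [hgb, hzpow, hC1v, hC2v, hC3v, hBnr, h8']
    field_simp
  rw [Finset.sum_congr rfl step, ← Finset.mul_sum, chu n ((n:ℝ) + l) (1/2)]
  have hrefl : rpr (l + 1/2) n = (-1:ℝ)^n * rpr (1/2 - ((n:ℝ) + l)) n := by
    have h1 : rpr (l + 1/2) n = ∏ i ∈ Finset.range n, ((-1) * (1/2 - ((n:ℝ) + l) + i)) := by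
      rw [← rpr_reflect (l + 1/2) n]
      exact Finset.prod_congr rfl fun i _ => by ring
    rw [h1, Finset.prod_mul_distrib, Finset.prod_const, Finset.card_range]
    rfl
  rw [hrefl]
  ring


theorem combinatorial_identity_even (n : ℕ) (hn : 1 ≤ n) (l : ℝ) :
    (∑ r ∈ Finset.range (n + 1),
        (-1 : ℝ) ^ (n - r) * 2 ^ (2 * r - 1 : ℤ) * gbinom ((n : ℝ) + r + l - 1) r *
          ((n + r).choose (2 * r) : ℝ) / ((n + r).choose r : ℝ)) *
      gbinom ((n : ℝ) + l - 1) (n - 1) =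
    (1 / 2) * gbinom (2 * (n : ℝ) + 2 * l - 1) (2 * n - 1) := by
  obtain ⟨m, rfl⟩ : ∃ m, n = m + 1 := ⟨n - 1, by omega⟩
  rw [sum_eq (m+1) l]
  have g1 : gbinom ((↑(m+1):ℝ) + l - 1) (m + 1 - 1) = rpr (l+1) m / m.factorial := by
    rw [show m + 1 - 1 = m from rfl]
    unfold gbinom
    congr 1
    rw [← rpr_reflect (l+1) m]
    exact Finset.prod_congr rfl fun i _ => by push_cast; ring
  have g2 : gbinom (2 * (↑(m+1):ℝ) + 2*l - 1) (2*(m+1) - 1)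
      = 2^(2*m+1) * rpr (l+1/2) (m+1) * rpr (l+1) m / ((2*m+1).factorial : ℝ) := by
    rw [show 2*(m+1) - 1 = 2*m+1 by omega]
    unfold gbinom
    rw [← rpr_split m l]
    congr 1
    rw [← rpr_reflect (2*l+1) (2*m+1)]
    exact Finset.prod_congr rfl fun i _ => by push_cast; ring
  rw [g1, g2]
  have hfact : ((2*m+1).factorial : ℝ) = 2^(2*m+1) * rpr (1/2) (m+1) * (m.factorial : ℝ) := by
    have h := half_fact (m+1)
    have hA : ((2*(m+1)).factorial : ℝ) = (2*(m:ℝ)+2) * ((2*m+1).factorial : ℝ) := by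
      rw [show 2*(m+1) = (2*m+1)+1 by ring, Nat.factorial_succ]
      push_cast; ring
    have hB : (((m+1)).factorial : ℝ) = ((m:ℝ)+1) * (m.factorial : ℝ) := by
      rw [Nat.factorial_succ]; push_cast; ring
    have h4 : (4:ℝ)^(m+1) = 2 * 2^(2*m+1) := by
      rw [show (4:ℝ) = 2^2 by norm_num, ← pow_mul]
      rw [show 2*(m+1) = (2*m+1)+1 by ring, pow_succ]
      ring
    rw [hA, hB, h4] at h
    have hne : (2*(m:ℝ)+2) ≠ 0 := by positivity
    apply mul_left_cancel₀ hne
    linear_combination -h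
  rw [hfact]
  have f1 : rpr (1/2) (m+1) ≠ 0 := ne_of_gt (rpr_pos (by norm_num) (m+1))
  have f2 : ((m.factorial : ℝ)) ≠ 0 := by positivity
  have f3 : (2:ℝ)^(2*m+1) ≠ 0 := by positivity
  field_simp
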